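/- The chromatic number of the square of the 9-dimensional hypercube is at least 13; that is, for any proper coloring of Q_9^2 (any assignment of colors to bit strings of length 9 such that distinct strings at Hamming distance at most 2 receive different colors), at least 13 colors are used. -/

import Mathlib

open Finset

/-- Hamming weight of a length-9 bit string. -/
def wtQ9 (z : Fin 9 → Bool) : ℕ := (Finset.univ.filter (fun i => z i = true)).card

/-- Coefficients of the Delsarte LP certificate: 6K₀+4K₁+2K₂+K₃+K₇+2K₈+4K₉. -/
def coefQ9 : ℕ → ℤ
  | 0 => 6 | 1 => 4 | 2 => 2 | 3 => 1 | 7 => 1 | 8 => 2 | 9 => 4 | _ => 0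

/-- Character value (-1)^(u·z). -/
def sgnQ9 (u z : Fin 9 → Bool) : ℤ := ∏ i, (if u i && z i then (-1 : ℤ) else 1)

/-- The certificate polynomial evaluated via characters. -/
def GQ9 (z : Fin 9 → Bool) : ℤ := ∑ u : Fin 9 → Bool, coefQ9 (wtQ9 u) * sgnQ9 u z

lemma coefQ9_nonneg (n : ℕ) : 0 ≤ coefQ9 n := by
  unfold coefQ9; split <;> norm_num

lemma wtQ9_eq_sum (z : Fin 9 → Bool) :
    wtQ9 z = ∑ i, (if z i = true then 1 else 0) := Finset.card_filter _ _

lemma wtQ9_comp (z : Fin 9 → Bool) (σ : Equiv.Perm (Fin 9)) : wtQ9 (z ∘ σ) = wtQ9 z := by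
  rw [wtQ9_eq_sum, wtQ9_eq_sum]
  exact Fintype.sum_equiv σ _ _ (fun i => rfl)

lemma sgnQ9_comp (u z : Fin 9 → Bool) (σ : Equiv.Perm (Fin 9)) :
    sgnQ9 (u ∘ σ) (z ∘ σ) = sgnQ9 u z := by
  unfold sgnQ9
  exact Fintype.prod_equiv σ _ _ (fun i => rfl)

lemma GQ9_comp (z : Fin 9 → Bool) (σ : Equiv.Perm (Fin 9)) : GQ9 (z ∘ σ) = GQ9 z := by
  refine (Fintype.sum_bijective (fun u : Fin 9 → Bool => u ∘ σ)
    ((Equiv.arrowCongr σ.symm (Equiv.refl Bool)).bijective) _ _ ?_).symm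
  intro u
  rw [wtQ9_comp, sgnQ9_comp]

/-- Canonical bit string of weight w. -/
def canonQ9 (w : ℕ) : Fin 9 → Bool := fun i => decide (i.val < w)

lemma wtQ9_le (z : Fin 9 → Bool) : wtQ9 z ≤ 9 := by
  have := Finset.card_filter_le (Finset.univ : Finset (Fin 9)) (fun i => z i = true)
  simpa [wtQ9] using this

lemma card_canonQ9 (w : ℕ) (hw : w ≤ 9) :
    Fintype.card {i : Fin 9 // canonQ9 w i = true} = w := by
  interval_cases w <;> decide

lemma exists_perm_canon (z : Fin 9 → Bool) :
    ∃ σ : Equiv.Perm (Fin 9), z = canonQ9 (wtQ9 z) ∘ σ := by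
  set w := wtQ9 z with hw
  have hcard : Fintype.card {i : Fin 9 // z i = true} =
      Fintype.card {i : Fin 9 // canonQ9 w i = true} := by
    rw [card_canonQ9 w (wtQ9_le z), Fintype.card_subtype, hw]
    rfl
  have hcardc : Fintype.card {i : Fin 9 // ¬ z i = true} =
      Fintype.card {i : Fin 9 // ¬ canonQ9 w i = true} := by
    have h1 := Fintype.card_subtype_compl (fun i : Fin 9 => z i = true)
    have h2 := Fintype.card_subtype_compl (fun i : Fin 9 => canonQ9 w i = true)
    rw [h1, h2, hcard]
  set e := Fintype.equivOfCardEq hcard with he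
  set f := Fintype.equivOfCardEq hcardc with hf
  refine ⟨Equiv.subtypeCongr e f, ?_⟩
  funext i
  by_cases h : z i = true
  · have happ : (Equiv.subtypeCongr e f) i = ↑(e ⟨i, h⟩) := by
      simp only [Equiv.subtypeCongr, Equiv.trans_apply, Equiv.sumCongr_apply]
      rw [Equiv.sumCompl_symm_apply_of_pos (p := fun x => z x = true) h, Sum.map_inl,
        Equiv.sumCompl_apply_inl]
    have hq := (e ⟨i, h⟩).2
    simp only [Function.comp_apply, happ, hq, h]
  · have happ : (Equiv.subtypeCongr e f) i = ↑(f ⟨i, h⟩) := by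
      simp only [Equiv.subtypeCongr, Equiv.trans_apply, Equiv.sumCongr_apply]
      rw [Equiv.sumCompl_symm_apply_of_neg (p := fun x => z x = true) h, Sum.map_inr,
        Equiv.sumCompl_apply_inr]
    have hq := (f ⟨i, h⟩).2
    simp only [Function.comp_apply, happ]
    rw [Bool.not_eq_true] at h hq
    rw [h, hq]

set_option maxRecDepth 1000000 in
lemma GQ9_canon_nonpos (w : ℕ) (h3 : 3 ≤ w) (h9 : w ≤ 9) : GQ9 (canonQ9 w) ≤ 0 := by
  interval_cases w <;> decide

lemma GQ9_nonpos (z : Fin 9 → Bool) (h3 : 3 ≤ wtQ9 z) : GQ9 z ≤ 0 := by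
  obtain ⟨σ, hz⟩ := exists_perm_canon z
  calc GQ9 z = GQ9 (canonQ9 (wtQ9 z) ∘ σ) := by rw [← hz]
    _ = GQ9 (canonQ9 (wtQ9 z)) := GQ9_comp _ σ
    _ ≤ 0 := GQ9_canon_nonpos _ h3 (wtQ9_le z)

set_option maxRecDepth 1000000 in
lemma GQ9_zero : GQ9 (fun _ => false) = 256 := by decide

lemma sgnQ9_mul (u x y : Fin 9 → Bool) :
    sgnQ9 u x * sgnQ9 u y = sgnQ9 u (fun i => x i != y i) := by
  unfold sgnQ9
  rw [← Finset.prod_mul_distrib]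
  refine Finset.prod_congr rfl (fun i _ => ?_)
  have : ∀ a b c : Bool, (if a && b then (-1 : ℤ) else 1) * (if a && c then (-1 : ℤ) else 1)
      = if a && (b != c) then (-1 : ℤ) else 1 := by decide
  exact this (u i) (x i) (y i)

lemma wtQ9_xor_eq_hammingDist (x y : Fin 9 → Bool) :
    wtQ9 (fun i => x i != y i) = hammingDist x y := by
  unfold wtQ9 hammingDist
  congr 1
  apply Finset.filter_congr
  intro i _
  simp [bne_iff_ne]

/-- Key bound: a binary code of length 9 with minimum distance 3 has at most 42 codewords. -/
lemma code_card_le_42 (C : Finset (Fin 9 → Bool))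
    (h : ∀ x ∈ C, ∀ y ∈ C, x ≠ y → 3 ≤ hammingDist x y) : C.card ≤ 42 := by
  set M : ℤ := (C.card : ℤ) with hM
  have hM0 : 0 ≤ M := Int.natCast_nonneg _
  set A : ℤ := ∑ u : Fin 9 → Bool,
      coefQ9 (wtQ9 u) * ((∑ x ∈ C, sgnQ9 u x) * (∑ x ∈ C, sgnQ9 u x)) with hA
  -- lower bound
  have hlow : 6 * (M * M) ≤ A := by
    have hmem : (fun _ => false : Fin 9 → Bool) ∈ (Finset.univ : Finset (Fin 9 → Bool)) :=
      Finset.mem_univ _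
    have hterm : coefQ9 (wtQ9 (fun _ => false)) *
        ((∑ x ∈ C, sgnQ9 (fun _ => false) x) * (∑ x ∈ C, sgnQ9 (fun _ => false) x))
        = 6 * (M * M) := by
      have h1 : wtQ9 (fun _ => false : Fin 9 → Bool) = 0 := by decide
      have h2 : ∀ x : Fin 9 → Bool, sgnQ9 (fun _ => false) x = 1 := by
        intro x; unfold sgnQ9; simp
      rw [h1]
      simp only [h2, Finset.sum_const, nsmul_eq_mul, mul_one]
      rfl
    calc 6 * (M * M) = coefQ9 (wtQ9 (fun _ => false)) *
          ((∑ x ∈ C, sgnQ9 (fun _ => false) x) * (∑ x ∈ C, sgnQ9 (fun _ => false) x)) :=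
          hterm.symm
      _ ≤ A := by
          refine Finset.single_le_sum (f := fun u : Fin 9 → Bool =>
            coefQ9 (wtQ9 u) * ((∑ x ∈ C, sgnQ9 u x) * (∑ x ∈ C, sgnQ9 u x)))
            (fun u _ => ?_) hmem
          exact mul_nonneg (coefQ9_nonneg _) (mul_self_nonneg _)
  -- rewrite A as double sum of GQ9
  have hAeq : A = ∑ x ∈ C, ∑ y ∈ C, GQ9 (fun i => x i != y i) := by
    rw [hA]
    have step : ∀ u : Fin 9 → Bool,
        coefQ9 (wtQ9 u) * ((∑ x ∈ C, sgnQ9 u x) * (∑ x ∈ C, sgnQ9 u x))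
        = ∑ x ∈ C, ∑ y ∈ C, coefQ9 (wtQ9 u) * sgnQ9 u (fun i => x i != y i) := by
      intro u
      rw [Finset.sum_mul_sum, Finset.mul_sum]
      refine Finset.sum_congr rfl (fun x _ => ?_)
      rw [Finset.mul_sum]
      refine Finset.sum_congr rfl (fun y _ => ?_)
      rw [sgnQ9_mul]
    calc (∑ u : Fin 9 → Bool,
          coefQ9 (wtQ9 u) * ((∑ x ∈ C, sgnQ9 u x) * (∑ x ∈ C, sgnQ9 u x)))
        = ∑ u : Fin 9 → Bool, ∑ x ∈ C, ∑ y ∈ C,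
            coefQ9 (wtQ9 u) * sgnQ9 u (fun i => x i != y i) :=
          Finset.sum_congr rfl (fun u _ => step u)
      _ = ∑ x ∈ C, ∑ u : Fin 9 → Bool, ∑ y ∈ C,
            coefQ9 (wtQ9 u) * sgnQ9 u (fun i => x i != y i) := Finset.sum_comm
      _ = ∑ x ∈ C, ∑ y ∈ C, ∑ u : Fin 9 → Bool,
            coefQ9 (wtQ9 u) * sgnQ9 u (fun i => x i != y i) :=
          Finset.sum_congr rfl (fun x _ => Finset.sum_comm)
      _ = ∑ x ∈ C, ∑ y ∈ C, GQ9 (fun i => x i != y i) := rfl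
  -- upper bound
  have hup : A ≤ 256 * M := by
    rw [hAeq]
    have hx : ∀ x ∈ C, (∑ y ∈ C, GQ9 (fun i => x i != y i)) ≤ 256 := by
      intro x hx
      have hsplit := Finset.add_sum_erase C (fun y => GQ9 (fun i => x i != y i)) hx
      have hdiag : GQ9 (fun i => x i != x i) = 256 := by
        have : (fun i => x i != x i) = (fun _ => false : Fin 9 → Bool) := by
          funext i; simp
        rw [this, GQ9_zero]
      have hrest : (∑ y ∈ C.erase x, GQ9 (fun i => x i != y i)) ≤ 0 := by
        refine Finset.sum_nonpos (fun y hy => ?_)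
        obtain ⟨hyne, hyC⟩ := Finset.mem_erase.mp hy
        refine GQ9_nonpos _ ?_
        rw [wtQ9_xor_eq_hammingDist]
        exact h x hx y hyC (Ne.symm hyne)
      rw [← hsplit]
      beta_reduce
      rw [hdiag]
      linarith
    calc (∑ x ∈ C, ∑ y ∈ C, GQ9 (fun i => x i != y i))
        ≤ ∑ _x ∈ C, (256 : ℤ) := Finset.sum_le_sum hx
      _ = 256 * M := by rw [Finset.sum_const, nsmul_eq_mul, mul_comm, hM]
  -- conclude
  have key : 6 * (M * M) ≤ 256 * M := le_trans hlow hup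
  by_contra hcon
  push_neg at hcon
  have h43 : (43 : ℤ) ≤ M := by
    rw [hM]; exact_mod_cast Nat.succ_le_of_lt hcon
  nlinarith

theorem chromatic_number_square_Q9_ge_13 :
    ∀ {α : Type} [DecidableEq α] (c : (Fin 9 → Bool) → α),
      (∀ x y : Fin 9 → Bool, x ≠ y → hammingDist x y ≤ 2 → c x ≠ c y) →
      13 ≤ (Finset.univ.image c).card := by
  intro α _ c hc
  have hcover : (Finset.univ : Finset (Fin 9 → Bool)).card =
      ∑ a ∈ Finset.univ.image c, ((Finset.univ : Finset (Fin 9 → Bool)).filter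
        (fun x => c x = a)).card :=
    Finset.card_eq_sum_card_fiberwise (fun x _ => Finset.mem_image_of_mem c (Finset.mem_univ x))
  have huniv : (Finset.univ : Finset (Fin 9 → Bool)).card = 512 := by
    simp [Fintype.card_fun]
  have hfiber : ∀ a ∈ Finset.univ.image c,
      ((Finset.univ : Finset (Fin 9 → Bool)).filter (fun x => c x = a)).card ≤ 42 := by
    intro a _
    refine code_card_le_42 _ ?_
    intro x hx y hy hxy
    have hcx : c x = a := (Finset.mem_filter.mp hx).2
    have hcy : c y = a := (Finset.mem_filter.mp hy).2
    by_contra hlt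
    push_neg at hlt
    exact hc x y hxy (by omega) (hcx.trans hcy.symm)
  have hsum : (512 : ℕ) ≤ ∑ a ∈ Finset.univ.image c, 42 := by
    rw [← huniv, hcover]
    exact Finset.sum_le_sum hfiber
  rw [Finset.sum_const, smul_eq_mul] at hsum
  omega
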